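/- Let t0 > 0, let λ0 > 0, let (X, μ) be a measure space, let Λ : X → [0,∞) be measurable with Λ(ξ) ≥ λ0 for μ-almost every ξ ∈ X, and let b : [t0,∞) → ℝ be a measurable function such that m/t ≤ b(t) ≤ M/t for every t ≥ t0, where M ≥ m > 0 are real constants. Let u : [t0,∞) × X → ℝ be such that for every ξ ∈ X the function t ↦ u(t,ξ) is a solution of the damped oscillator equation u'' + b(t)u' + Λ(ξ)²u = 0, and such that for each t ≥ t0 the functions ξ ↦ u(t,ξ) and ξ ↦ ∂_t u(t,ξ) are measurable. Then for every t ≥ t0 one has ∫_X [ (∂_t u(t,ξ))² + Λ(ξ)²·u(t,ξ)² ] dμ(ξ) ≤ exp(m(M+8)/(λ0·t0)) · ( ∫_X [ (∂_t u(t0,ξ))² + Λ(ξ)²·u(t0,ξ)² ] dμ(ξ) ) · (t0/t)^m. -/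

import Mathlib

set_option maxHeartbeats 1000000
open Real Set Filter MeasureTheory intervalIntegral

lemma key_prod (a t : ℝ) (hat : a ≤ t) (w₁ w₂ : ℝ → ℝ)
    (h₁ : IntervalIntegrable w₁ volume a t) (h₂ : IntervalIntegrable w₂ volume a t) :
    (∫ s in a..t, w₁ s) * (∫ s in a..t, w₂ s)
      = ∫ s in a..t, ((∫ r in a..s, w₁ r) * w₂ s + (∫ r in a..s, w₂ r) * w₁ s) := by
  have hsub : ∀ s ∈ Ioc a t, IntervalIntegrable w₁ volume a s ∧ IntervalIntegrable w₂ volume a s := by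
    intro s hs
    constructor
    · exact h₁.mono_set (by rw [uIcc_of_le hs.1.le, uIcc_of_le hat]; exact Icc_subset_Icc_right hs.2)
    · exact h₂.mono_set (by rw [uIcc_of_le hs.1.le, uIcc_of_le hat]; exact Icc_subset_Icc_right hs.2)
  have hw₁ : Integrable w₁ (volume.restrict (Ioc a t)) := h₁.1
  have hw₂ : Integrable w₂ (volume.restrict (Ioc a t)) := h₂.1
  have hcP : ContinuousOn (fun x => ∫ r in a..x, w₁ r) (uIcc a t) :=
    intervalIntegral.continuousOn_primitive_interval (by
      rw [uIcc_of_le hat]; exact (intervalIntegrable_iff_integrableOn_Icc_of_le hat).mp h₁)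
  have hcQ : ContinuousOn (fun x => ∫ r in a..x, w₂ r) (uIcc a t) :=
    intervalIntegral.continuousOn_primitive_interval (by
      rw [uIcc_of_le hat]; exact (intervalIntegrable_iff_integrableOn_Icc_of_le hat).mp h₂)
  have hintPw₂ : Integrable (fun s => (∫ r in a..s, w₁ r) * w₂ s) (volume.restrict (Ioc a t)) := (h₂.continuousOn_mul hcP).1
  have hintQw₁ : Integrable (fun s => (∫ r in a..s, w₂ r) * w₁ s) (volume.restrict (Ioc a t)) := (h₁.continuousOn_mul hcQ).1
  have hS : MeasurableSet {p : ℝ × ℝ | p.2 ≤ p.1} := measurableSet_le measurable_snd measurable_fst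
  have hF : Integrable (fun p : ℝ × ℝ => w₂ p.1 * w₁ p.2) ((volume.restrict (Ioc a t)).prod (volume.restrict (Ioc a t))) := hw₂.mul_prod hw₁
  have hg : Integrable (fun p : ℝ × ℝ => if p.2 ≤ p.1 then w₂ p.1 * w₁ p.2 else 0) ((volume.restrict (Ioc a t)).prod (volume.restrict (Ioc a t))) := by
    refine (hF.indicator hS).congr (Filter.Eventually.of_forall fun p => ?_)
    simp [Set.indicator_apply, Set.mem_setOf_eq]
  have swap := MeasureTheory.integral_integral_swap (f := fun s r => if r ≤ s then w₂ s * w₁ r else 0)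
      (μ := (volume.restrict (Ioc a t))) (ν := (volume.restrict (Ioc a t))) hg
  have lhs_eq : (∫ s, ∫ r, (if r ≤ s then w₂ s * w₁ r else 0) ∂(volume.restrict (Ioc a t)) ∂(volume.restrict (Ioc a t)))
      = ∫ s in Ioc a t, (∫ r in a..s, w₁ r) * w₂ s := by
    apply setIntegral_congr_fun measurableSet_Ioc
    intro s hs
    show (∫ r, (if r ≤ s then w₂ s * w₁ r else 0) ∂(volume.restrict (Ioc a t))) = (∫ r in a..s, w₁ r) * w₂ s
    have hfe : (fun r => if r ≤ s then w₂ s * w₁ r else 0) = (Iic s).indicator (fun r => w₂ s * w₁ r) := by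
      ext r; simp [Set.indicator_apply, Set.mem_Iic]
    rw [hfe, MeasureTheory.integral_indicator measurableSet_Iic,
      Measure.restrict_restrict measurableSet_Iic]
    have hset : Iic s ∩ Ioc a t = Ioc a s := by
      ext r; simp only [mem_inter_iff, mem_Iic, mem_Ioc]
      exact ⟨fun ⟨h1, h2, h3⟩ => ⟨h2, h1⟩, fun ⟨h1, h2⟩ => ⟨h2, h1, h2.trans hs.2⟩⟩
    rw [hset, MeasureTheory.integral_const_mul, intervalIntegral.integral_of_le hs.1.le, mul_comm]
  have rhs_eq : (∫ r, ∫ s, (if r ≤ s then w₂ s * w₁ r else 0) ∂(volume.restrict (Ioc a t)) ∂(volume.restrict (Ioc a t)))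
      = ∫ r in Ioc a t, w₁ r * ((∫ s in a..t, w₂ s) - ∫ s in a..r, w₂ s) := by
    apply setIntegral_congr_fun measurableSet_Ioc
    intro r hr
    show (∫ s, (if r ≤ s then w₂ s * w₁ r else 0) ∂(volume.restrict (Ioc a t))) = w₁ r * ((∫ s in a..t, w₂ s) - ∫ s in a..r, w₂ s)
    have hfe : (fun s => if r ≤ s then w₂ s * w₁ r else 0) = (Ici r).indicator (fun s => w₂ s * w₁ r) := by
      ext s; simp [Set.indicator_apply, Set.mem_Ici]
    rw [hfe, MeasureTheory.integral_indicator measurableSet_Ici,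
      Measure.restrict_restrict measurableSet_Ici]
    have hset : Ici r ∩ Ioc a t = Icc r t := by
      ext s; simp only [mem_inter_iff, mem_Ici, mem_Ioc, mem_Icc]
      exact ⟨fun ⟨h1, h2, h3⟩ => ⟨h1, h3⟩, fun ⟨h1, h2⟩ => ⟨h1, hr.1.trans_le h1, h2⟩⟩
    rw [hset, MeasureTheory.integral_Icc_eq_integral_Ioc,
      MeasureTheory.integral_mul_const,
      ← intervalIntegral.integral_of_le hr.2,
      ← intervalIntegral.integral_interval_sub_left h₂ (hsub r hr).2, mul_comm]
  have expand : (∫ r in Ioc a t, w₁ r * ((∫ s in a..t, w₂ s) - ∫ s in a..r, w₂ s))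
      = (∫ s in a..t, w₂ s) * (∫ r in Ioc a t, w₁ r)
        - ∫ r in Ioc a t, (∫ s in a..r, w₂ s) * w₁ r := by
    have hcong : (fun r => w₁ r * ((∫ s in a..t, w₂ s) - ∫ s in a..r, w₂ s))
        = fun r => w₁ r * (∫ s in a..t, w₂ s) - (∫ s in a..r, w₂ s) * w₁ r := by
      ext r; ring
    rw [hcong, MeasureTheory.integral_sub (hw₁.mul_const _) hintQw₁,
      MeasureTheory.integral_mul_const, mul_comm]
  rw [lhs_eq, rhs_eq, expand, intervalIntegral.integral_of_le hat] at swap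
  rw [intervalIntegral.integral_of_le hat, intervalIntegral.integral_of_le hat,
    intervalIntegral.integral_of_le hat,
    MeasureTheory.integral_add hintPw₂ hintQw₁]
  linear_combination -swap


/-- `f` is absolutely continuous on `[a, ∞)` with density `F`. -/
def ACOn (a : ℝ) (f F : ℝ → ℝ) : Prop :=
  ContinuousOn f (Ici a) ∧
  (∀ T ≥ a, IntervalIntegrable F volume a T) ∧
  ∀ t ∈ Ici a, f t = f a + ∫ s in a..t, F s

namespace ACOn

variable {a : ℝ} {f F g G : ℝ → ℝ}

lemma congr' (h : ACOn a f F) (hf : ∀ t, f t = g t) (hF : ∀ t, F t = G t) :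
    ACOn a g G := by
  have h1 : f = g := funext hf
  have h2 : F = G := funext hF
  rw [← h1, ← h2]; exact h

lemma ofDeriv (hd : ∀ t ∈ Ici a, HasDerivAt f (F t) t) (hc : ContinuousOn F (Ici a)) :
    ACOn a f F := by
  refine ⟨fun t ht => ((hd t ht).continuousAt).continuousWithinAt, fun T hT => ?_, fun t ht => ?_⟩
  · exact (hc.mono (by rw [uIcc_of_le hT]; exact fun x hx => hx.1)).intervalIntegrable
  · have huIcc : uIcc a t ⊆ Ici a := by rw [uIcc_of_le ht]; exact fun x hx => hx.1
    rw [intervalIntegral.integral_eq_sub_of_hasDerivAt (fun s hs => hd s (huIcc hs))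
      ((hc.mono huIcc).intervalIntegrable)]
    ring

lemma add (hf : ACOn a f F) (hg : ACOn a g G) :
    ACOn a (fun t => f t + g t) (fun t => F t + G t) := by
  refine ⟨hf.1.add hg.1, fun T hT => (hf.2.1 T hT).add (hg.2.1 T hT), fun t ht => ?_⟩
  rw [intervalIntegral.integral_add (hf.2.1 t ht) (hg.2.1 t ht)]
  have h1 := hf.2.2 t ht; have h2 := hg.2.2 t ht
  show f t + g t = f a + g a + _
  linarith

lemma const_mul (c : ℝ) (hf : ACOn a f F) :
    ACOn a (fun t => c * f t) (fun t => c * F t) := by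
  refine ⟨hf.1.const_smul c, fun T hT => (hf.2.1 T hT).const_mul c, fun t ht => ?_⟩
  rw [intervalIntegral.integral_const_mul]
  have h1 := hf.2.2 t ht
  show c * f t = c * f a + c * _
  rw [h1]; ring

lemma contOn_on_uIcc (hf : ACOn a f F) {T : ℝ} (hT : a ≤ T) : ContinuousOn f (uIcc a T) := by
  refine hf.1.mono ?_
  rw [uIcc_of_le hT]; exact fun x hx => hx.1

lemma mul (hf : ACOn a f F) (hg : ACOn a g G) :
    ACOn a (fun t => f t * g t) (fun t => f t * G t + g t * F t) := by
  have hint : ∀ T ≥ a, IntervalIntegrable (fun t => f t * G t + g t * F t) volume a T := by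
    intro T hT
    exact ((hg.2.1 T hT).continuousOn_mul (hf.contOn_on_uIcc hT)).add
      ((hf.2.1 T hT).continuousOn_mul (hg.contOn_on_uIcc hT))
  refine ⟨hf.1.mul hg.1, hint, fun t ht => ?_⟩
  have key := key_prod a t ht F G (hf.2.1 t ht) (hg.2.1 t ht)
  -- replace primitives by f, g inside the integral
  have hcong : EqOn (fun s => (∫ r in a..s, F r) * G s + (∫ r in a..s, G r) * F s)
      (fun s => (f s - f a) * G s + (g s - g a) * F s) (uIcc a t) := by
    intro s hs
    rw [uIcc_of_le ht] at hs
    have h1 := hf.2.2 s hs.1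
    have h2 := hg.2.2 s hs.1
    simp only
    rw [show (∫ r in a..s, F r) = f s - f a by linarith,
        show (∫ r in a..s, G r) = g s - g a by linarith]
  rw [intervalIntegral.integral_congr hcong] at key
  have hsplit : (∫ s in a..t, ((f s - f a) * G s + (g s - g a) * F s))
      = (∫ s in a..t, (f s * G s + g s * F s)) - f a * (∫ s in a..t, G s)
        - g a * (∫ s in a..t, F s) := by
    have e1 : (fun s => (f s - f a) * G s + (g s - g a) * F s)
        = fun s => (f s * G s + g s * F s) - (f a * G s + g a * F s) := by ext s; ring
    rw [e1, intervalIntegral.integral_sub (hint t ht)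
      (((hg.2.1 t ht).const_mul (f a)).add ((hf.2.1 t ht).const_mul (g a))),
      intervalIntegral.integral_add ((hg.2.1 t ht).const_mul (f a))
        ((hf.2.1 t ht).const_mul (g a)),
      intervalIntegral.integral_const_mul, intervalIntegral.integral_const_mul]
    ring
  rw [hsplit] at key
  have h1 := hf.2.2 t ht
  have h2 := hg.2.2 t ht
  show f t * g t = f a * g a + _
  rw [h1, h2]; linear_combination key

lemma restrict (hf : ACOn a f F) {a' : ℝ} (ha' : a ≤ a') : ACOn a' f F := by
  refine ⟨hf.1.mono (Ici_subset_Ici.mpr ha'), fun T hT => ?_, fun t ht => ?_⟩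
  · refine (hf.2.1 T (ha'.trans hT)).mono_set ?_
    rw [uIcc_of_le hT, uIcc_of_le (ha'.trans hT)]
    exact Icc_subset_Icc_left ha'
  · have h1 := hf.2.2 t (ha'.trans ht)
    have h2 := hf.2.2 a' ha'
    have hII : IntervalIntegrable F volume a' t := by
      refine (hf.2.1 t (ha'.trans ht)).mono_set ?_
      rw [uIcc_of_le ht, uIcc_of_le (ha'.trans ht)]
      exact Icc_subset_Icc_left ha'
    have hadd := intervalIntegral.integral_add_adjacent_intervals (hf.2.1 a' ha') hII
    linarith

lemma le_of_deriv_nonpos (hf : ACOn a f F)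
    (hneg : ∀ᵐ t ∂(volume.restrict (Ici a)), F t ≤ 0) :
    ∀ t ∈ Ici a, f t ≤ f a := by
  intro t ht
  have hrep := hf.2.2 t ht
  have : (∫ s in a..t, F s) ≤ 0 := by
    rw [intervalIntegral.integral_of_le ht]
    refine integral_nonpos_of_ae ?_
    exact ae_restrict_of_ae_restrict_of_subset (fun x hx => hx.1.le) hneg
  linarith

end ACOn

/-- The key pointwise differential inequality. -/
lemma deriv_key (m M lam t b u v w : ℝ) (ht : 0 < t) (hm : 0 < m) (hmM : m ≤ M)
    (hlam : 0 < lam) (hlt : m ≤ lam * t) (hb1 : m / t ≤ b) (hb2 : b ≤ M / t)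
    (heq : w + b * v + lam ^ 2 * u = 0) :
    (m / t - (M - m + 1) * m / (t * (2 * lam * t - m)))
        * (v ^ 2 + lam ^ 2 * u ^ 2 + (m / t) * (u * v))
      + (2 * v * w + 2 * lam ^ 2 * (u * v) + (m / t) * (u * w + v * v)
          - (m / t ^ 2) * (u * v)) ≤ 0 := by
  have hD : 0 < 2 * lam * t - m := by nlinarith
  have hw : w = -(b * v) - lam ^ 2 * u := by linarith
  subst hw
  have hbt1 : m ≤ b * t := by
    have := (div_le_iff₀ ht).mp hb1; linarith
  have hbt2 : b * t ≤ M := by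
    have := (le_div_iff₀ ht).mp hb2; linarith
  set Br := (m / t - (M - m + 1) * m / (t * (2 * lam * t - m)))
        * (v ^ 2 + lam ^ 2 * u ^ 2 + (m / t) * (u * v))
      + (2 * v * (-(b * v) - lam ^ 2 * u) + 2 * lam ^ 2 * (u * v)
          + (m / t) * (u * (-(b * v) - lam ^ 2 * u) + v * v) - (m / t ^ 2) * (u * v)) with hBr
  have hpos : 0 < 2 * lam * t ^ 2 * (2 * lam * t - m) := by positivity
  have key : Br * (2 * lam * t ^ 2 * (2 * lam * t - m)) ≤ 0 := by
    have hexp : Br * (2 * lam * t ^ 2 * (2 * lam * t - m))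
        = -(2 * ((2 * lam * t * (2 * lam * t - m)) * ((b * t - m) * v ^ 2)))
          - (m * (2 * lam * t - m)) * ((b * t + 1 - m) * ((v ^ 2 + lam ^ 2 * u ^ 2) + 2 * lam * (u * v)))
          - (m * (2 * lam * t - m)) * ((M - b * t) * (v ^ 2 + lam ^ 2 * u ^ 2))
          - (M - m + 1) * m ^ 2 * (v + lam * u) ^ 2 := by
      rw [hBr]; have hD' := hD.ne'; generalize hDg : 2 * lam * t - m = D at hD' ⊢; field_simp; rw [← hDg]; ring
    rw [hexp]
    have hK : (0:ℝ) < M - m + 1 := by linarith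
    have H1 : 0 ≤ (2 * lam * t * (2 * lam * t - m)) * ((b * t - m) * v ^ 2) :=
      mul_nonneg (by positivity) (mul_nonneg (by linarith) (sq_nonneg v))
    have H2 : 0 ≤ (m * (2 * lam * t - m)) * ((b * t + 1 - m) * ((v ^ 2 + lam ^ 2 * u ^ 2) + 2 * lam * (u * v))) := by
      have h2a : 0 ≤ (v ^ 2 + lam ^ 2 * u ^ 2) + 2 * lam * (u * v) := by nlinarith [sq_nonneg (v + lam * u)]
      have h2b : 0 ≤ b * t + 1 - m := by linarith
      exact mul_nonneg (by positivity) (mul_nonneg h2b h2a)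
    have H3 : 0 ≤ (m * (2 * lam * t - m)) * ((M - b * t) * (v ^ 2 + lam ^ 2 * u ^ 2)) := by
      have : 0 ≤ M - b * t := by linarith
      exact mul_nonneg (by positivity) (mul_nonneg this (by positivity))
    have H4 : 0 ≤ (M - m + 1) * m ^ 2 * (v + lam * u) ^ 2 := by positivity
    linarith
  nlinarith [key, hpos]

lemma budget1 (t0 lam0 m M lam t : ℝ) (ht0 : 0 < t0) (hl0 : 0 < lam0) (hll : lam0 ≤ lam)
    (hm : 0 < m) (hmM : m ≤ M) (htt0 : t0 ≤ t) (ht1 : t ≤ max t0 (m / lam)) :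
    m * Real.log (t / t0) ≤ m * (M + 8) / (lam0 * t0) := by
  have hlam : 0 < lam := lt_of_lt_of_le hl0 hll
  have hq : 0 < lam0 * t0 := by positivity
  rcases le_or_gt (m / lam) t0 with hc | hc
  · have : t = t0 := le_antisymm (by rwa [max_eq_left hc] at ht1) htt0
    rw [this, div_self ht0.ne', Real.log_one, mul_zero]
    apply div_nonneg (by nlinarith) (by positivity)
  · rw [max_eq_right hc.le] at ht1
    set z := m / (lam * t0) with hz
    have hz0 : 0 < z := by positivity
    have hlog : Real.log (t / t0) ≤ z - 1 := by
      have h1 : t / t0 ≤ z := by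
        rw [hz, div_le_div_iff₀ (by positivity) (by positivity)]
        calc t * (lam * t0) = (lam * t) * t0 := by ring
          _ ≤ (lam * (m/lam)) * t0 := by
              have : lam * t ≤ lam * (m / lam) := mul_le_mul_of_nonneg_left ht1 hlam.le
              nlinarith [ht0]
          _ = m * t0 := by field_simp
      calc Real.log (t / t0) ≤ t / t0 - 1 := Real.log_le_sub_one_of_pos (div_pos (lt_of_lt_of_le ht0 htt0) ht0)
        _ ≤ z - 1 := by linarith
    have hzq : z ≤ m / (lam0 * t0) := by
      apply div_le_div_of_nonneg_left hm.le hq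
      nlinarith
    have : m * Real.log (t / t0) ≤ m * (z - 1) := mul_le_mul_of_nonneg_left hlog hm.le
    have hB : (M + 8) * z ≤ m * (M + 8) / (lam0 * t0) := by
      have h := mul_le_mul_of_nonneg_left hzq (show (0:ℝ) ≤ M + 8 by linarith)
      calc (M + 8) * z ≤ (M + 8) * (m / (lam0 * t0)) := h
        _ = m * (M + 8) / (lam0 * t0) := by ring
    nlinarith [mul_nonneg (show (0:ℝ) ≤ M + 8 - m by linarith) (show (0:ℝ) ≤ z - 0 by linarith)]

lemma budget_main (t0 lam0 m M lam t : ℝ) (ht0 : 0 < t0) (hl0 : 0 < lam0) (hll : lam0 ≤ lam)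
    (hm : 0 < m) (hmM : m ≤ M) (ht : max t0 (m / lam) ≤ t) :
    Real.log (1 + m / (2 * lam * max t0 (m / lam)))
      + (m * Real.log (max t0 (m / lam))
        + (M - m + 1) * (Real.log (max t0 (m / lam)) - Real.log (2 * lam * max t0 (m / lam) - m)))
    ≤ m * (M + 8) / (lam0 * t0) + Real.log (t0 / t) * m
      + Real.log (1 - m / (2 * lam * max t0 (m / lam)))
      + (m * Real.log t + (M - m + 1) * (Real.log t - Real.log (2 * lam * t - m))) := by
  have hlam : 0 < lam := lt_of_lt_of_le hl0 hll
  set t1 := max t0 (m / lam) with ht1def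
  have ht10 : t0 ≤ t1 := le_max_left _ _
  have ht1pos : 0 < t1 := lt_of_lt_of_le ht0 ht10
  have htpos : 0 < t := lt_of_lt_of_le ht1pos ht
  have hmlt1 : m ≤ lam * t1 := by
    have h := le_max_right t0 (m / lam)
    rw [ht1def]
    calc m = lam * (m / lam) := by field_simp
      _ ≤ lam * max t0 (m / lam) := mul_le_mul_of_nonneg_left h hlam.le
  have hD1 : 0 < 2 * lam * t1 - m := by nlinarith
  have hDt : 0 < 2 * lam * t - m := by nlinarith [mul_le_mul_of_nonneg_left ht hlam.le]
  set x := m / (2 * lam * t1) with hxdef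
  have hx0 : 0 < x := by positivity
  have hx12 : x ≤ 1 / 2 := by
    rw [hxdef, div_le_div_iff₀ (by positivity) (by norm_num)]
    nlinarith
  have hK0 : (0:ℝ) < (M - m + 1) := by linarith
  -- log bounds
  have b1 : Real.log (1 + x) ≤ x := by
    have := Real.log_le_sub_one_of_pos (show (0:ℝ) < 1 + x by linarith)
    linarith
  have hxeq : 1 - x = (2 * lam * t1 - m) / (2 * lam * t1) := by
    rw [hxdef]; field_simp
  have b2' : Real.log (1 - x) = Real.log (2 * lam * t1 - m) - Real.log (2 * lam * t1) := by
    rw [hxeq, Real.log_div hD1.ne' (by positivity)]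
  have b2 : Real.log (2 * lam * t1) - Real.log (2 * lam * t1 - m) ≤ 2 * x := by
    have h1 : Real.log (1 - x)⁻¹ ≤ (1 - x)⁻¹ - 1 :=
      Real.log_le_sub_one_of_pos (by rw [hxeq]; positivity)
    rw [Real.log_inv] at h1
    have h2 : (1 - x)⁻¹ - 1 ≤ 2 * x := by
      rw [inv_eq_one_div, div_sub' (by linarith : (1:ℝ) - x ≠ 0)]
      rw [div_le_iff₀ (by linarith : (0:ℝ) < 1 - x)]
      nlinarith
    have := b2'
    linarith
  have b3 : Real.log t1 + Real.log (2 * lam * t - m) ≤ Real.log t + Real.log (2 * lam * t1) := by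
    rw [← Real.log_mul ht1pos.ne' hDt.ne', ← Real.log_mul htpos.ne' (by positivity)]
    apply Real.log_le_log (by positivity)
    nlinarith
  have hlog_t0t : Real.log (t0 / t) = Real.log t0 - Real.log t := Real.log_div ht0.ne' htpos.ne'
  -- multiplied forms
  have f1 : (M - m + 1) * (Real.log t1 + Real.log (2 * lam * t - m))
      ≤ (M - m + 1) * (Real.log t + Real.log (2 * lam * t1)) := mul_le_mul_of_nonneg_left b3 hK0.le
  have f2 : (M - m + 1) * (Real.log (2 * lam * t1) - Real.log (2 * lam * t1 - m)) ≤ (M - m + 1) * (2 * x) :=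
    mul_le_mul_of_nonneg_left b2 hK0.le
  -- case analysis for the numeric part
  have main : x + 2 * (M - m + 1) * x + 2 * x + m * (Real.log t1 - Real.log t0)
      ≤ m * (M + 8) / (lam0 * t0) := by
    have hq : 0 < lam0 * t0 := by positivity
    rcases le_or_gt (m / lam) t0 with hc | hc
    · have ht1t0 : t1 = t0 := max_eq_left hc
      rw [ht1t0, sub_self, mul_zero, add_zero]
      have hxq : x ≤ m / (2 * (lam0 * t0)) := by
        rw [hxdef, ht1t0]
        apply div_le_div_of_nonneg_left hm.le (by positivity)
        nlinarith
      have h1 : x + 2 * (M - m + 1) * x + 2 * x = (2 * (M - m + 1) + 3) * x := by ring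
      rw [h1]
      have h2 : (2 * (M - m + 1) + 3) * x ≤ (2 * (M - m + 1) + 3) * (m / (2 * (lam0 * t0))) :=
        mul_le_mul_of_nonneg_left hxq (by linarith)
      have h3 : (2 * (M - m + 1) + 3) * (m / (2 * (lam0 * t0))) ≤ m * (M + 8) / (lam0 * t0) := by
        rw [mul_div_assoc', div_le_div_iff₀ (by positivity) hq]
        have expand : m * (M + 8) * (2 * (lam0 * t0)) - (2 * (M - m + 1) + 3) * m * (lam0 * t0)
            = (2 * m + 11) * m * (lam0 * t0) := by ring
        linarith [expand, mul_nonneg (mul_nonneg (show (0:ℝ) ≤ 2 * m + 11 by linarith) hm.le) hq.le]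
      linarith
    · have ht1m : t1 = m / lam := max_eq_right hc.le
      have hxhalf : x = 1 / 2 := by
        rw [hxdef, ht1m]
        rw [div_eq_iff (by positivity), show 2 * lam * (m / lam) = 2 * m by field_simp]
        ring
      set z := m / (lam * t0) with hz
      have hz1 : 1 < z := by
        rw [hz, lt_div_iff₀ (by positivity)]
        have h := (lt_div_iff₀ hlam).mp hc
        linarith
      have hlt1 : Real.log t1 - Real.log t0 ≤ z - 1 := by
        have hdiv : t1 / t0 = z := by rw [ht1m, hz]; field_simp
        have := Real.log_le_sub_one_of_pos (show 0 < t1/t0 by positivity)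
        rw [Real.log_div ht1pos.ne' ht0.ne'] at this
        linarith [hdiv ▸ this]
      have hzq : z ≤ m / (lam0 * t0) := by
        apply div_le_div_of_nonneg_left hm.le hq; nlinarith
      have hB : (M + 8) * z ≤ m * (M + 8) / (lam0 * t0) := by
        have h := mul_le_mul_of_nonneg_left hzq (show (0:ℝ) ≤ M + 8 by linarith)
        calc (M + 8) * z ≤ (M + 8) * (m / (lam0 * t0)) := h
          _ = m * (M + 8) / (lam0 * t0) := by ring
      have hmz := mul_le_mul_of_nonneg_left hlt1 hm.le
      rw [hxhalf]
      nlinarith [mul_nonneg (show (0:ℝ) ≤ M + 8 - m by linarith) (show (0:ℝ) ≤ z - 1 by linarith)]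
  -- assemble
  rw [hlog_t0t]
  have hb2'' := b2'
  linarith [b1, f1, f2, main]

/-- comparability: lower bound -/
lemma mini1 (lam t1 t m E P : ℝ) (hlam : 0 < lam) (ht1 : 0 < t1) (ht : t1 ≤ t)
    (hm : 0 < m) (hA : -E ≤ 2 * lam * P) (hE : 0 ≤ E) :
    (1 - m / (2 * lam * t1)) * E ≤ E + (m / t) * P := by
  have htpos : 0 < t := lt_of_lt_of_le ht1 ht
  have hc : (0:ℝ) < 2 * lam * t1 * t := by positivity
  rw [← mul_le_mul_iff_of_pos_right hc]
  have lhs_eq : (1 - m / (2 * lam * t1)) * E * (2 * lam * t1 * t)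
      = 2 * lam * t1 * t * E - m * t * E := by field_simp
  have rhs_eq : (E + (m / t) * P) * (2 * lam * t1 * t)
      = 2 * lam * t1 * t * E + m * t1 * (2 * lam * P) := by field_simp
  rw [lhs_eq, rhs_eq]
  have h1 : m * t1 * (2 * lam * P) ≥ m * t1 * (-E) :=
    mul_le_mul_of_nonneg_left hA (by positivity)
  nlinarith [mul_le_mul_of_nonneg_left ht (mul_nonneg hm.le hE)]

/-- comparability: upper bound -/
lemma mini2 (lam t1 m E P : ℝ) (hlam : 0 < lam) (ht1 : 0 < t1)
    (hm : 0 < m) (hA : 2 * lam * P ≤ E) (hE : 0 ≤ E) :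
    E + (m / t1) * P ≤ (1 + m / (2 * lam * t1)) * E := by
  have hc : (0:ℝ) < 2 * lam * t1 := by positivity
  rw [← mul_le_mul_iff_of_pos_right hc]
  have lhs_eq : (E + (m / t1) * P) * (2 * lam * t1) = E * (2 * lam * t1) + m * (2 * lam * P) := by
    field_simp
  have rhs_eq : (1 + m / (2 * lam * t1)) * E * (2 * lam * t1) = E * (2 * lam * t1) + m * E := by
    field_simp
  rw [lhs_eq, rhs_eq]
  nlinarith [mul_le_mul_of_nonneg_left hA hm.le]

lemma pointwise_decay (t0 lam0 m M : ℝ) (b : ℝ → ℝ) (lam : ℝ) (u v w : ℝ → ℝ)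
    (ht0 : 0 < t0) (hlam0 : 0 < lam0) (hm : 0 < m) (hmM : m ≤ M)
    (hb : ∀ t ≥ t0, m / t ≤ b t ∧ b t ≤ M / t)
    (hlam : lam0 ≤ lam)
    (hu : ∀ t ∈ Ici t0, HasDerivAt u (v t) t)
    (hvc : ContinuousOn v (Ici t0))
    (hwint : ∀ T ≥ t0, IntervalIntegrable w volume t0 T)
    (hvrep : ∀ t ∈ Ici t0, v t = v t0 + ∫ s in t0..t, w s)
    (heq : ∀ᵐ t ∂(volume.restrict (Ici t0)), w t + b t * v t + lam ^ 2 * u t = 0) :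
    ∀ t ≥ t0, v t ^ 2 + lam ^ 2 * u t ^ 2 ≤
      Real.exp (m * (M + 8) / (lam0 * t0)) * (v t0 ^ 2 + lam ^ 2 * u t0 ^ 2) * (t0 / t) ^ (m:ℝ) := by
  have hlamp : 0 < lam := lt_of_lt_of_le hlam0 hlam
  set B := m * (M + 8) / (lam0 * t0) with hBdef
  set t1 := max t0 (m / lam) with ht1def
  have ht10 : t0 ≤ t1 := le_max_left _ _
  have ht1pos : 0 < t1 := lt_of_lt_of_le ht0 ht10
  have hmlt1 : m ≤ lam * t1 := by
    have h := le_max_right t0 (m / lam)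
    calc m = lam * (m / lam) := by field_simp
      _ ≤ lam * t1 := mul_le_mul_of_nonneg_left h hlamp.le
  have hD1 : 0 < 2 * lam * t1 - m := by nlinarith
  -- base AC structures
  have hAu : ACOn t0 u v := ACOn.ofDeriv hu hvc
  have hAv : ACOn t0 v w := ⟨hvc, hwint, hvrep⟩
  set E : ℝ → ℝ := fun s => v s ^ 2 + lam ^ 2 * u s ^ 2 with hEdef
  have hAE : ACOn t0 E (fun s => 2 * (v s * w s) + 2 * lam ^ 2 * (u s * v s)) := by
    have h1 := hAv.mul hAv
    have h2 := (hAu.mul hAu).const_mul (lam ^ 2)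
    exact (h1.add h2).congr' (fun s => by simp only [hEdef]; ring) (fun s => by ring)
  have hEnonneg : ∀ s, 0 ≤ E s := fun s => by rw [hEdef]; positivity
  -- Phase 1: E is nonincreasing
  have hEanti : ∀ s ∈ Ici t0, E s ≤ E t0 := by
    apply hAE.le_of_deriv_nonpos
    filter_upwards [heq, ae_restrict_mem measurableSet_Ici] with s hseq hsmem
    have hbs := hb s hsmem
    have hts : 0 < s := lt_of_lt_of_le ht0 hsmem
    have hbpos : 0 ≤ b s := le_trans (by positivity) hbs.1
    have hws : w s = -(b s * v s) - lam ^ 2 * u s := by linarith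
    rw [hws]
    nlinarith [sq_nonneg (v s), mul_nonneg hbpos (sq_nonneg (v s))]
  -- Phase 2 structures based at t1
  have hAuv : ACOn t1 (fun s => u s * v s) (fun s => u s * w s + v s * v s) :=
    (hAu.restrict ht10).mul (hAv.restrict ht10)
  have hAphi : ACOn t1 (fun s => m / s) (fun s => -(m / s ^ 2)) := by
    apply ACOn.ofDeriv
    · intro s hs
      have hs0 : s ≠ 0 := (lt_of_lt_of_le ht1pos hs).ne'
      have := (hasDerivAt_inv hs0).const_mul m
      simpa [div_eq_mul_inv, neg_div] using this.congr_deriv (by field_simp)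
    · exact (continuousOn_const.div (continuousOn_pow 2)
        (fun s hs => pow_ne_zero 2 (lt_of_lt_of_le ht1pos hs).ne')).neg
  set F : ℝ → ℝ := fun s => E s + (m / s) * (u s * v s) with hFdef
  set fF : ℝ → ℝ := fun s => 2 * (v s * w s) + 2 * lam ^ 2 * (u s * v s)
      + (m / s) * (u s * w s + v s * v s) - (m / s ^ 2) * (u s * v s) with hfFdef
  have hAF : ACOn t1 F fF := by
    have := (hAE.restrict ht10).add (hAphi.mul hAuv)
    exact this.congr' (fun s => by simp only [hFdef]) (fun s => by simp only [hfFdef]; ring)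
  -- the weight function
  set G : ℝ → ℝ := fun s => m * Real.log s
      + (M - m + 1) * (Real.log s - Real.log (2 * lam * s - m)) with hGdef
  set Phi : ℝ → ℝ := fun s => Real.exp (G s) with hPhidef
  have hPhipos : ∀ s, 0 < Phi s := fun s => Real.exp_pos _
  have hAPhi : ACOn t1 Phi
      (fun s => Phi s * (m / s - (M - m + 1) * m / (s * (2 * lam * s - m)))) := by
    apply ACOn.ofDeriv
    · intro s hs
      have hs1 : t1 ≤ s := hs
      have hs0 : 0 < s := lt_of_lt_of_le ht1pos hs1
      have hDs : 0 < 2 * lam * s - m := by nlinarith [mul_le_mul_of_nonneg_left hs1 hlamp.le]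
      have hlin : HasDerivAt (fun y => 2 * lam * y - m) (2 * lam) s := by
        simpa using ((hasDerivAt_id s).const_mul (2 * lam)).sub_const m
      have hlog1 : HasDerivAt Real.log s⁻¹ s := Real.hasDerivAt_log hs0.ne'
      have hlog2 : HasDerivAt (fun y => Real.log (2 * lam * y - m))
          (2 * lam / (2 * lam * s - m)) s := hlin.log hDs.ne'
      have hG : HasDerivAt G (m * s⁻¹ + (M - m + 1) * (s⁻¹ - 2 * lam / (2 * lam * s - m))) s := by
        rw [hGdef]
        exact ((hlog1.const_mul m).add (((hlog1.sub hlog2)).const_mul (M - m + 1)))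
      have := hG.exp
      rw [hPhidef]
      refine this.congr_deriv ?_
      show Real.exp (G s) * _ = Real.exp (G s) * _
      congr 1
      have hD' := hDs.ne'
      generalize hDg : 2 * lam * s - m = D at hD' ⊢
      field_simp
      rw [← hDg]
      ring
    · have hlogc : ContinuousOn Real.log (Ici t1) :=
        Real.continuousOn_log.mono (fun s hs => (lt_of_lt_of_le ht1pos hs).ne')
      have hDc : ContinuousOn (fun s => 2 * lam * s - m) (Ici t1) := by fun_prop
      have hDne : ∀ s ∈ Ici t1, 2 * lam * s - m ≠ 0 := by
        intro s hs
        have : 0 < 2 * lam * s - m := by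
          nlinarith [mul_le_mul_of_nonneg_left (hs : t1 ≤ s) hlamp.le]
        exact this.ne'
      have hlogD : ContinuousOn (fun s => Real.log (2 * lam * s - m)) (Ici t1) :=
        hDc.log hDne
      have hGc : ContinuousOn G (Ici t1) := by
        rw [hGdef]
        exact ((continuousOn_const.mul hlogc).add
          (continuousOn_const.mul (hlogc.sub hlogD)))
      have hPhic : ContinuousOn Phi (Ici t1) := by
        rw [hPhidef]; exact Real.continuous_exp.comp_continuousOn hGc
      have hsne : ∀ s ∈ Ici t1, s ≠ 0 := fun s hs => (lt_of_lt_of_le ht1pos hs).ne'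
      apply hPhic.mul
      apply ContinuousOn.sub
      · exact continuousOn_const.div continuousOn_id hsne
      · exact continuousOn_const.div (continuousOn_id.mul hDc)
          (fun s hs => mul_ne_zero (hsne s hs) (hDne s hs))
  have hAH := hAPhi.mul hAF
  have hHanti : ∀ s ∈ Ici t1, Phi s * F s ≤ Phi t1 * F t1 := by
    apply hAH.le_of_deriv_nonpos
    filter_upwards [ae_restrict_of_ae_restrict_of_subset (Ici_subset_Ici.mpr ht10) heq,
      ae_restrict_mem measurableSet_Ici] with s hseq hsmem
    have hs0 : 0 < s := lt_of_lt_of_le ht1pos hsmem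
    have hst0 : t0 ≤ s := le_trans ht10 hsmem
    have hmls : m ≤ lam * s := le_trans hmlt1 (mul_le_mul_of_nonneg_left hsmem hlamp.le)
    have hkey := deriv_key m M lam s (b s) (u s) (v s) (w s) hs0 hm hmM hlamp hmls
      (hb s hst0).1 (hb s hst0).2 hseq
    show Phi s * fF s
        + F s * (Phi s * (m / s - (M - m + 1) * m / (s * (2 * lam * s - m)))) ≤ 0
    have hid : Phi s * fF s
        + F s * (Phi s * (m / s - (M - m + 1) * m / (s * (2 * lam * s - m))))
        = Phi s * ((m / s - (M - m + 1) * m / (s * (2 * lam * s - m)))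
            * (v s ^ 2 + lam ^ 2 * u s ^ 2 + (m / s) * (u s * v s))
          + (2 * v s * w s + 2 * lam ^ 2 * (u s * v s) + (m / s) * (u s * w s + v s * v s)
            - (m / s ^ 2) * (u s * v s))) := by
      simp only [hfFdef, hFdef, hEdef]; ring
    rw [hid]
    have hprod := mul_nonneg (hPhipos s).le (neg_nonneg.mpr hkey)
    nlinarith [hprod]
  -- final assembly
  intro t htt0
  have htpos : 0 < t := lt_of_lt_of_le ht0 htt0
  rcases le_total t t1 with hcase | hcase
  · -- Phase 1 region
    have hE := hEanti t htt0
    have hbud := budget1 t0 lam0 m M lam t ht0 hlam0 hlam hm hmM htt0 hcase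
    have hlogdiv : Real.log (t0 / t) = - Real.log (t / t0) := by
      rw [Real.log_div ht0.ne' htpos.ne', Real.log_div htpos.ne' ht0.ne']; ring
    have hone : (1:ℝ) ≤ Real.exp B * (t0 / t) ^ (m:ℝ) := by
      rw [Real.rpow_def_of_pos (by positivity), ← Real.exp_add,
        show (1:ℝ) = Real.exp 0 from (Real.exp_zero).symm]
      apply Real.exp_le_exp.mpr
      rw [hlogdiv, hBdef]
      nlinarith [hbud]
    show E t ≤ Real.exp B * E t0 * (t0 / t) ^ (m:ℝ)
    calc E t ≤ E t0 := hE
      _ ≤ (Real.exp B * (t0 / t) ^ (m:ℝ)) * E t0 := le_mul_of_one_le_left (hEnonneg t0) hone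
      _ = Real.exp B * E t0 * (t0 / t) ^ (m:ℝ) := by ring
  · -- Phase 2 region
    have hst0 : t0 ≤ t := le_trans ht10 hcase
    have hDt : 0 < 2 * lam * t - m := by
      nlinarith [mul_le_mul_of_nonneg_left hcase hlamp.le]
    set x := m / (2 * lam * t1) with hxdef
    have hx0 : 0 < x := by positivity
    have hx12 : x ≤ 1 / 2 := by
      rw [hxdef, div_le_div_iff₀ (by positivity) (by norm_num)]
      nlinarith
    have h1x : (0:ℝ) < 1 + x := by linarith
    have h1mx : (0:ℝ) < 1 - x := by linarith
    have hA1 : -(E t) ≤ 2 * lam * (u t * v t) := by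
      simp only [hEdef]; nlinarith [sq_nonneg (v t + lam * u t)]
    have hA2 : 2 * lam * (u t1 * v t1) ≤ E t1 := by
      simp only [hEdef]; nlinarith [sq_nonneg (v t1 - lam * u t1)]
    have hlow : (1 - x) * E t ≤ F t := by
      have h := mini1 lam t1 t m (E t) (u t * v t) hlamp ht1pos hcase hm hA1 (hEnonneg t)
      simpa [hFdef, hxdef] using h
    have hup : F t1 ≤ (1 + x) * E t1 := by
      have h := mini2 lam t1 m (E t1) (u t1 * v t1) hlamp ht1pos hm hA2 (hEnonneg t1)
      simpa [hFdef, hxdef] using h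
    have hEt1 : E t1 ≤ E t0 := hEanti t1 ht10
    have hchain : (1 - x) * Phi t * E t ≤ (1 + x) * Phi t1 * E t0 := by
      have c3 : (1 + x) * E t1 ≤ (1 + x) * E t0 := mul_le_mul_of_nonneg_left hEt1 h1x.le
      calc (1 - x) * Phi t * E t = Phi t * ((1 - x) * E t) := by ring
        _ ≤ Phi t * F t := mul_le_mul_of_nonneg_left hlow (hPhipos t).le
        _ ≤ Phi t1 * F t1 := hHanti t hcase
        _ ≤ Phi t1 * ((1 + x) * E t1) := mul_le_mul_of_nonneg_left hup (hPhipos t1).le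
        _ ≤ Phi t1 * ((1 + x) * E t0) := mul_le_mul_of_nonneg_left c3 (hPhipos t1).le
        _ = (1 + x) * Phi t1 * E t0 := by ring
    have hfac : (1 + x) * Phi t1 ≤ (Real.exp B * (t0 / t) ^ (m:ℝ)) * ((1 - x) * Phi t) := by
      have e1 : (1 + x) * Phi t1 = Real.exp (Real.log (1 + x) + G t1) := by
        rw [hPhidef]
        show (1 + x) * Real.exp (G t1) = _
        conv_lhs => rw [← Real.exp_log h1x, ← Real.exp_add]
      have e2 : (Real.exp B * (t0 / t) ^ (m:ℝ)) * ((1 - x) * Phi t)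
          = Real.exp (B + Real.log (t0 / t) * m + Real.log (1 - x) + G t) := by
        rw [hPhidef]
        show Real.exp B * (t0 / t) ^ (m:ℝ) * ((1 - x) * Real.exp (G t)) = _
        conv_lhs => rw [Real.rpow_def_of_pos (div_pos ht0 htpos), ← Real.exp_log h1mx,
          ← Real.exp_add, ← Real.exp_add, ← Real.exp_add]
        congr 1
        ring
      rw [e1, e2]
      apply Real.exp_le_exp.mpr
      have hbud := budget_main t0 lam0 m M lam t ht0 hlam0 hlam hm hmM
        (by rw [← ht1def]; exact hcase)
      rw [← ht1def] at hbud
      simp only [hGdef, hxdef, hBdef]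
      linarith [hbud]
    have hpos2 : 0 < (1 - x) * Phi t := mul_pos h1mx (hPhipos t)
    have h2 : (1 + x) * Phi t1 * E t0
        ≤ (Real.exp B * (t0 / t) ^ (m:ℝ)) * ((1 - x) * Phi t) * E t0 :=
      mul_le_mul_of_nonneg_right hfac (hEnonneg t0)
    have h3 : ((1 - x) * Phi t) * E t
        ≤ ((1 - x) * Phi t) * (Real.exp B * E t0 * (t0 / t) ^ (m:ℝ)) := by
      calc ((1 - x) * Phi t) * E t = (1 - x) * Phi t * E t := by ring
        _ ≤ (Real.exp B * (t0 / t) ^ (m:ℝ)) * ((1 - x) * Phi t) * E t0 := le_trans hchain h2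
        _ = ((1 - x) * Phi t) * (Real.exp B * E t0 * (t0 / t) ^ (m:ℝ)) := by ring
    show E t ≤ Real.exp B * E t0 * (t0 / t) ^ (m:ℝ)
    exact le_of_mul_le_mul_left h3 hpos2

/-- A solution of the damped oscillator equation `u'' + b(t) u' + λ² u = 0` on `[t0, ∞)`:
a `C¹` function `u` (with derivative `u'`) whose derivative is locally absolutely continuous
(i.e. it is the integral of a locally integrable function `w`) and which satisfies the
equation almost everywhere on `[t0, ∞)`. -/
def IsDampedSol (t0 : ℝ) (b : ℝ → ℝ) (lam : ℝ) (u u' : ℝ → ℝ) : Prop :=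
  (∀ t ∈ Ici t0, HasDerivAt u (u' t) t) ∧
  ContinuousOn u' (Ici t0) ∧
  ∃ w : ℝ → ℝ,
    (∀ T ≥ t0, IntervalIntegrable w volume t0 T) ∧
    (∀ t ∈ Ici t0, u' t = u' t0 + ∫ s in t0..t, w s) ∧
    (∀ᵐ t ∂(volume.restrict (Ici t0)), w t + b t * u' t + lam ^ 2 * u t = 0)

theorem coercive_decay_PDE
    {X : Type*} [MeasurableSpace X] (μ : Measure X)
    (t0 lam0 m M : ℝ) (ht0 : 0 < t0) (hlam0 : 0 < lam0) (hm : 0 < m) (hmM : m ≤ M)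
    (Λ : X → ℝ) (hΛmeas : Measurable Λ) (hΛpos : ∀ ξ, 0 ≤ Λ ξ)
    (hΛlb : ∀ᵐ ξ ∂μ, lam0 ≤ Λ ξ)
    (b : ℝ → ℝ) (hbmeas : Measurable b)
    (hb : ∀ t ≥ t0, m / t ≤ b t ∧ b t ≤ M / t)
    (u u' : ℝ → X → ℝ)
    (hsol : ∀ ξ, IsDampedSol t0 b (Λ ξ) (fun t => u t ξ) (fun t => u' t ξ))
    (hmeas : ∀ t ≥ t0, Measurable (u t) ∧ Measurable (u' t)) :
    ∀ t ≥ t0,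
      (∫⁻ ξ, ENNReal.ofReal (u' t ξ ^ 2 + Λ ξ ^ 2 * u t ξ ^ 2) ∂μ) ≤
        ENNReal.ofReal (Real.exp (m * (M + 8) / (lam0 * t0))) *
          (∫⁻ ξ, ENNReal.ofReal (u' t0 ξ ^ 2 + Λ ξ ^ 2 * u t0 ξ ^ 2) ∂μ) *
          ENNReal.ofReal ((t0 / t) ^ m) := by
  intro t htt0
  have htpos : 0 < t := lt_of_lt_of_le ht0 htt0
  set B := m * (M + 8) / (lam0 * t0) with hBdef
  have hr0 : (0:ℝ) ≤ (t0 / t) ^ (m:ℝ) := Real.rpow_nonneg (by positivity) _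
  have hcoef : (0:ℝ) ≤ Real.exp B * (t0 / t) ^ (m:ℝ) :=
    mul_nonneg (Real.exp_nonneg _) hr0
  have hptw : ∀ᵐ ξ ∂μ, ENNReal.ofReal (u' t ξ ^ 2 + Λ ξ ^ 2 * u t ξ ^ 2)
      ≤ ENNReal.ofReal ((Real.exp B * (t0 / t) ^ (m:ℝ))
          * (u' t0 ξ ^ 2 + Λ ξ ^ 2 * u t0 ξ ^ 2)) := by
    filter_upwards [hΛlb] with ξ hξ
    obtain ⟨hd, hc, w, hwint, hwrep, heqw⟩ := hsol ξ
    have h := pointwise_decay t0 lam0 m M b (Λ ξ) (fun s => u s ξ) (fun s => u' s ξ) w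
      ht0 hlam0 hm hmM hb hξ hd hc hwint hwrep heqw t htt0
    apply ENNReal.ofReal_le_ofReal
    nlinarith [h]
  calc (∫⁻ ξ, ENNReal.ofReal (u' t ξ ^ 2 + Λ ξ ^ 2 * u t ξ ^ 2) ∂μ)
      ≤ ∫⁻ ξ, ENNReal.ofReal ((Real.exp B * (t0 / t) ^ (m:ℝ))
          * (u' t0 ξ ^ 2 + Λ ξ ^ 2 * u t0 ξ ^ 2)) ∂μ := lintegral_mono_ae hptw
    _ = ∫⁻ ξ, ENNReal.ofReal (Real.exp B * (t0 / t) ^ (m:ℝ))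
          * ENNReal.ofReal (u' t0 ξ ^ 2 + Λ ξ ^ 2 * u t0 ξ ^ 2) ∂μ := by
        apply lintegral_congr
        intro ξ
        rw [ENNReal.ofReal_mul hcoef]
    _ = ENNReal.ofReal (Real.exp B * (t0 / t) ^ (m:ℝ))
          * ∫⁻ ξ, ENNReal.ofReal (u' t0 ξ ^ 2 + Λ ξ ^ 2 * u t0 ξ ^ 2) ∂μ :=
        lintegral_const_mul' _ _ ENNReal.ofReal_ne_top
    _ = ENNReal.ofReal (Real.exp B) *
          (∫⁻ ξ, ENNReal.ofReal (u' t0 ξ ^ 2 + Λ ξ ^ 2 * u t0 ξ ^ 2) ∂μ) *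
          ENNReal.ofReal ((t0 / t) ^ (m:ℝ)) := by
        rw [ENNReal.ofReal_mul (Real.exp_nonneg _)]
        ring
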